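/- Let D_1, …, D_k be tree degree sequences on a common set of n vertices without common leaves. Then their coordinatewise sum F = f_1, …, f_n is a graphical degree sequence, i.e., there exists a simple graph whose degree sequence is exactly F. -/

import Mathlib

/-- `d` is a tree degree sequence on `n` vertices: all degrees are positive and
they sum to `2n - 2`. -/
def TreeDegSeq {n : ℕ} (d : Fin n → ℕ) : Prop :=
  (∀ v, 1 ≤ d v) ∧ (∑ v, d v) + 2 = 2 * n

/-- The degree sequences `D 0, …, D (k-1)` have no common leaves: if a vertex has degree `1`
in one of them, it has degree `> 1` in all the others. -/
def NoCommonLeaves {k n : ℕ} (D : Fin k → Fin n → ℕ) : Prop :=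
  ∀ (v : Fin n) (i j : Fin k), i ≠ j → D i v = 1 → 2 ≤ D j v

open Finset

section Graphical

variable {V : Type*} [Fintype V] [DecidableEq V]

/-- `f` is the degree sequence of some simple graph on `V`. -/
def Graphical (f : V → ℕ) : Prop :=
  ∃ G : SimpleGraph V, ∀ v, (G.neighborSet v).ncard = f v

lemma Graphical.comp_equiv {W : Type*} [Fintype W] [DecidableEq W] {g : W → ℕ}
    (hg : Graphical g) (e : V ≃ W) : Graphical (g ∘ e) := by
  obtain ⟨G, hG⟩ := hg
  refine ⟨G.comap e, fun v => ?_⟩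
  have h : (G.comap e).neighborSet v = ⇑e ⁻¹' G.neighborSet (e v) := rfl
  rw [h, ← Equiv.image_symm_eq_preimage,
    Set.ncard_image_of_injective _ e.symm.injective, hG]
  rfl

end Graphical

section RobinHood

variable {V : Type*} [Fintype V] [DecidableEq V]

lemma Graphical.robinHood {g : V → ℕ} (hg : Graphical g) {u w : V} (huw : g w + 2 ≤ g u) :
    Graphical (fun v => if v = u then g u - 1 else if v = w then g v + 1 else g v) := by
  classical
  obtain ⟨G, hG⟩ := hg
  have hune : u ≠ w := by rintro rfl; omega
  -- find a vertex x adjacent to u, not adjacent to w, different from w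
  have hx : ∃ x, G.Adj u x ∧ ¬ G.Adj w x ∧ x ≠ w := by
    by_contra hcon
    push_neg at hcon
    have hsub : G.neighborSet u \ {w} ⊆ G.neighborSet w := by
      rintro x ⟨hxu, hxw⟩
      simp only [Set.mem_singleton_iff] at hxw
      by_contra h
      exact hxw (hcon x hxu h)
    have h1 : (G.neighborSet u \ {w}).ncard ≤ g w := by
      calc (G.neighborSet u \ {w}).ncard ≤ (G.neighborSet w).ncard :=
            Set.ncard_le_ncard hsub (Set.toFinite _)
        _ = g w := hG w
    have h2 : g u ≤ (G.neighborSet u \ {w}).ncard + 1 := by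
      by_cases hw : w ∈ G.neighborSet u
      · rw [Set.ncard_diff_singleton_add_one hw]; exact (hG u).ge
      · rw [Set.diff_singleton_eq_self hw, hG u]; omega
    omega
  obtain ⟨x, hux, hwx, hxw⟩ := hx
  have hxu : x ≠ u := fun h => by subst h; exact G.irrefl hux
  have hnwx : ¬ G.Adj x w := fun h => hwx h.symm
  -- the new graph
  refine ⟨⟨fun a b => (G.Adj a b ∧ ¬(a = u ∧ b = x) ∧ ¬(a = x ∧ b = u)) ∨
      ((a = w ∧ b = x) ∨ (a = x ∧ b = w)), ?_, ?_⟩, ?_⟩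
  · constructor
    rintro a b (⟨h, h1, h2⟩ | (⟨rfl, rfl⟩ | ⟨rfl, rfl⟩))
    · exact Or.inl ⟨h.symm, fun hc => h2 ⟨hc.2, hc.1⟩, fun hc => h1 ⟨hc.2, hc.1⟩⟩
    · exact Or.inr (Or.inr ⟨rfl, rfl⟩)
    · exact Or.inr (Or.inl ⟨rfl, rfl⟩)
  · constructor
    rintro a (⟨h, -, -⟩ | (⟨rfl, rfl⟩ | ⟨rfl, rfl⟩))
    · exact G.irrefl h
    · exact hxw rfl
    · exact hxw rfl
  · intro v
    show Set.ncard {b | (G.Adj v b ∧ ¬(v = u ∧ b = x) ∧ ¬(v = x ∧ b = u)) ∨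
      ((v = w ∧ b = x) ∨ (v = x ∧ b = w))} =
      if v = u then g u - 1 else if v = w then g v + 1 else g v
    by_cases hvu : v = u
    · subst hvu
      have hset : {b | (G.Adj v b ∧ ¬(v = v ∧ b = x) ∧ ¬(v = x ∧ b = v)) ∨
          ((v = w ∧ b = x) ∨ (v = x ∧ b = w))} = G.neighborSet v \ {x} := by
        ext b
        simp only [Set.mem_setOf_eq, Set.mem_diff, SimpleGraph.mem_neighborSet,
          Set.mem_singleton_iff]
        tauto
      rw [hset, if_pos rfl,
        Set.ncard_diff_singleton_of_mem (show x ∈ G.neighborSet v from hux), hG v]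
    · by_cases hvw : v = w
      · subst hvw
        have hset : {b | (G.Adj v b ∧ ¬(v = u ∧ b = x) ∧ ¬(v = x ∧ b = u)) ∨
            ((v = v ∧ b = x) ∨ (v = x ∧ b = v))} = insert x (G.neighborSet v) := by
          ext b
          simp only [Set.mem_setOf_eq, Set.mem_insert_iff, SimpleGraph.mem_neighborSet]
          tauto
        rw [hset, if_neg hvu, if_pos rfl,
          Set.ncard_insert_of_notMem (show x ∉ G.neighborSet v from hwx), hG v]
      · by_cases hvx : v = x
        · subst hvx
          have hone : 1 ≤ g v := by
            rw [← hG v]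
            exact Set.ncard_pos (Set.toFinite _) |>.mpr ⟨u, G.adj_symm hux⟩
          have hset : {b | (G.Adj v b ∧ ¬(v = u ∧ b = v) ∧ ¬(v = v ∧ b = u)) ∨
              ((v = w ∧ b = v) ∨ (v = v ∧ b = w))} = insert w (G.neighborSet v \ {u}) := by
            ext b
            simp only [Set.mem_setOf_eq, Set.mem_insert_iff, Set.mem_diff,
              SimpleGraph.mem_neighborSet, Set.mem_singleton_iff]
            tauto
          rw [hset, if_neg hvu, if_neg hvw,
            Set.ncard_insert_of_notMem
              (show w ∉ G.neighborSet v \ {u} from fun hc => hnwx hc.1),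
            Set.ncard_diff_singleton_of_mem
              (show u ∈ G.neighborSet v from G.adj_symm hux), hG v]
          omega
        · have hset : {b | (G.Adj v b ∧ ¬(v = u ∧ b = x) ∧ ¬(v = x ∧ b = u)) ∨
              ((v = w ∧ b = x) ∨ (v = x ∧ b = w))} = G.neighborSet v := by
            ext b
            simp only [Set.mem_setOf_eq, SimpleGraph.mem_neighborSet]
            tauto
          rw [hset, if_neg hvu, if_neg hvw, hG v]

end RobinHood
section Descent

variable {V : Type*} [Fintype V] [DecidableEq V]

/-- `∑ v, (f v - r)`, the total degree above the waterline `r`. -/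
def SS (f : V → ℕ) (r : ℕ) : ℕ := ∑ v, (f v - r)

/-- The number of vertices with value `> r`. -/
def NN (f : V → ℕ) (r : ℕ) : ℕ := (univ.filter (fun v => r < f v)).card

lemma SS_succ (f : V → ℕ) (r : ℕ) : SS f r = SS f (r + 1) + NN f r := by
  unfold SS NN
  rw [Finset.card_filter, ← Finset.sum_add_distrib]
  refine Finset.sum_congr rfl fun v _ => ?_
  by_cases h : r < f v <;> simp [h] <;> omega

lemma SS_zero (f : V → ℕ) : SS f 0 = ∑ v, f v := by simp [SS]

lemma SS_eq_zero (f : V → ℕ) {r : ℕ} (h : ∑ v, f v ≤ r) : SS f r = 0 := by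
  refine Finset.sum_eq_zero fun v _ => ?_
  have : f v ≤ ∑ u, f u := Finset.single_le_sum (fun u _ => Nat.zero_le _) (mem_univ v)
  omega

lemma NN_antitone (f : V → ℕ) {r s : ℕ} (h : r ≤ s) : NN f s ≤ NN f r := by
  apply Finset.card_le_card
  intro v hv
  simp only [Finset.mem_filter] at hv ⊢
  exact ⟨hv.1, lt_of_le_of_lt h hv.2⟩

end Descent
section Descent2

variable {V : Type*} [Fintype V] [DecidableEq V]

lemma graphical_of_SS_eq {f g : V → ℕ} (heq : ∀ r, SS f r = SS g r) (hg : Graphical g) :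
    Graphical f := by
  classical
  have hNN : ∀ r, NN f r = NN g r := fun r => by
    have h1 := SS_succ f r; have h2 := SS_succ g r
    have h3 := heq r; have h4 := heq (r + 1); omega
  have hfilter : ∀ (y : ℕ),
      (univ.filter (fun v => f v = y)).card = (univ.filter (fun v => g v = y)).card := by
    intro y
    match y with
    | 0 =>
      have hf : (univ.filter (fun v : V => f v = 0)) = univ \ univ.filter (fun v => 0 < f v) := by
        ext v; simp only [mem_filter, mem_sdiff, mem_univ, true_and]; omega
      have hgg : (univ.filter (fun v : V => g v = 0)) = univ \ univ.filter (fun v => 0 < g v) := by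
        ext v; simp only [mem_filter, mem_sdiff, mem_univ, true_and]; omega
      rw [hf, hgg, Finset.card_sdiff_of_subset (filter_subset _ _), Finset.card_sdiff_of_subset (filter_subset _ _)]
      have := hNN 0; unfold NN at this; rw [this]
    | y + 1 =>
      have hf : (univ.filter (fun v : V => f v = y + 1)) =
          univ.filter (fun v => y < f v) \ univ.filter (fun v => y + 1 < f v) := by
        ext v; simp only [mem_filter, mem_sdiff, mem_univ, true_and]; omega
      have hgg : (univ.filter (fun v : V => g v = y + 1)) =
          univ.filter (fun v => y < g v) \ univ.filter (fun v => y + 1 < g v) := by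
        ext v; simp only [mem_filter, mem_sdiff, mem_univ, true_and]; omega
      have hsubf : univ.filter (fun v : V => y + 1 < f v) ⊆ univ.filter (fun v => y < f v) := by
        intro v hv; simp only [mem_filter] at hv ⊢; exact ⟨hv.1, by omega⟩
      have hsubg : univ.filter (fun v : V => y + 1 < g v) ⊆ univ.filter (fun v => y < g v) := by
        intro v hv; simp only [mem_filter] at hv ⊢; exact ⟨hv.1, by omega⟩
      rw [hf, hgg, Finset.card_sdiff_of_subset hsubf, Finset.card_sdiff_of_subset hsubg]
      have h1 := hNN y; have h2 := hNN (y + 1); unfold NN at h1 h2; rw [h1, h2]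
  have hfiber : ∀ y : ℕ, Fintype.card {v // f v = y} = Fintype.card {v // g v = y} := by
    intro y
    rw [Fintype.card_subtype, Fintype.card_subtype]
    exact hfilter y
  obtain ⟨G, hG⟩ := hg.comp_equiv (Equiv.ofFiberEquiv
    (fun y => Fintype.equivOfCardEq (hfiber y)))
  exact ⟨G, fun v => by rw [hG v]; exact Equiv.ofFiberEquiv_map _ v⟩

lemma Graphical.of_dominated_aux : ∀ (N : ℕ) (f g : V → ℕ), ∑ v, f v = ∑ v, g v →
    (∀ r, SS f r ≤ SS g r) → Graphical g →
    (∑ r ∈ Finset.range (∑ v, g v + 1), (SS g r - SS f r)) = N → Graphical f := by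
  intro N
  induction N using Nat.strong_induction_on with
  | _ N ih =>
  intro f g hsum hdom hg hM
  by_cases hQ : ∃ r, SS f r < SS g r
  case neg =>
    push_neg at hQ
    exact graphical_of_SS_eq (fun r => le_antisymm (hdom r) (hQ r)) hg
  case pos =>
  classical
  obtain ⟨r₁, hr₁, hmin⟩ : ∃ r₁, SS f r₁ < SS g r₁ ∧ ∀ r < r₁, SS f r = SS g r := by
    refine ⟨Nat.find hQ, Nat.find_spec hQ, fun r hr =>
      le_antisymm (hdom r) (le_of_not_gt (Nat.find_min hQ hr))⟩
  have hr₁pos : 1 ≤ r₁ := by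
    rcases Nat.eq_zero_or_pos r₁ with h | h
    · exfalso; rw [h, SS_zero, SS_zero, hsum] at hr₁; omega
    · exact h
  have hQ2 : ∃ j, ¬ (SS f (r₁ + j + 1) < SS g (r₁ + j + 1)) := by
    refine ⟨∑ v, g v, ?_⟩
    rw [SS_eq_zero g (by omega), SS_eq_zero f (by rw [hsum]; omega)]
    omega
  obtain ⟨j₀, hj₀spec, hj₀min⟩ : ∃ j₀, ¬ (SS f (r₁ + j₀ + 1) < SS g (r₁ + j₀ + 1)) ∧
      ∀ j < j₀, SS f (r₁ + j + 1) < SS g (r₁ + j + 1) := by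
    refine ⟨Nat.find hQ2, Nat.find_spec hQ2, fun j hj => not_not.mp (Nat.find_min hQ2 hj)⟩
  obtain ⟨r₂, hr₂def⟩ : ∃ r₂, r₂ = r₁ + j₀ := ⟨_, rfl⟩
  have hr₂top : SS f (r₂ + 1) = SS g (r₂ + 1) := by
    rw [hr₂def]
    exact le_antisymm (hdom _) (le_of_not_gt hj₀spec)
  have hQr : ∀ r, r₁ ≤ r → r ≤ r₂ → SS f r < SS g r := by
    intro r h1 h2
    obtain ⟨j, rfl⟩ : ∃ j, r = r₁ + j := ⟨r - r₁, by omega⟩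
    rcases Nat.eq_zero_or_pos j with rfl | hj
    · simpa using hr₁
    · have h' := hj₀min (j - 1) (by omega)
      have hidx : r₁ + (j - 1) + 1 = r₁ + j := by omega
      rwa [hidx] at h'
  have hufib : NN g (r₂ + 1) < NN g r₂ := by
    have e1 := SS_succ f r₂
    have e2 := SS_succ g r₂
    have e3 := SS_succ f (r₂ + 1)
    have e4 := SS_succ g (r₂ + 1)
    have h5 := hQr r₂ (by omega) (le_refl _)
    have h6 := hdom (r₂ + 1 + 1)
    have h7 : NN f (r₂ + 1) ≤ NN f r₂ := NN_antitone f (by omega)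
    omega
  have hu : ∃ u, g u = r₂ + 1 := by
    by_contra hcon
    push_neg at hcon
    have hsub : (univ.filter (fun v => r₂ < g v)) ⊆ (univ.filter (fun v => r₂ + 1 < g v)) := by
      intro v hv; simp only [mem_filter] at hv ⊢
      exact ⟨hv.1, by have := hcon v; omega⟩
    have := Finset.card_le_card hsub
    unfold NN at hufib; omega
  obtain ⟨u, hu⟩ := hu
  have hwfib : NN g (r₁ - 1) < NN f (r₁ - 1) := by
    have e1 := SS_succ f (r₁ - 1)
    have e2 := SS_succ g (r₁ - 1)
    have heq : SS f (r₁ - 1) = SS g (r₁ - 1) := hmin _ (by omega)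
    have hidx : r₁ - 1 + 1 = r₁ := by omega
    rw [hidx] at e1 e2
    omega
  have hw : ∃ w, g w + 1 = r₁ := by
    rcases Nat.lt_or_ge r₁ 2 with h2 | h2
    · by_contra hcon
      push_neg at hcon
      have hsub : (univ : Finset V) ⊆ univ.filter (fun v => r₁ - 1 < g v) := by
        intro v _; simp only [mem_filter, mem_univ, true_and]
        have := hcon v; omega
      have h3 := Finset.card_le_card hsub
      have h4 : NN f (r₁ - 1) ≤ (univ : Finset V).card :=
        Finset.card_le_card (filter_subset _ _)
      unfold NN at hwfib h3 h4
      omega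
    · have e7 := SS_succ f (r₁ - 2)
      have e8 := SS_succ g (r₁ - 2)
      have e5 := hmin (r₁ - 2) (by omega)
      have e6 := hmin (r₁ - 1) (by omega)
      have hidx : r₁ - 2 + 1 = r₁ - 1 := by omega
      rw [hidx] at e7 e8
      have h10 : NN f (r₁ - 1) ≤ NN f (r₁ - 2) := NN_antitone f (by omega)
      by_contra hcon
      push_neg at hcon
      have hsub : (univ.filter (fun v => r₁ - 2 < g v)) ⊆
          (univ.filter (fun v => r₁ - 1 < g v)) := by
        intro v hv; simp only [mem_filter] at hv ⊢
        refine ⟨hv.1, ?_⟩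
        have := hcon v; omega
      have h11 := Finset.card_le_card hsub
      unfold NN at hwfib h10 e7 e8
      omega
  obtain ⟨w, hw⟩ := hw
  have huw : u ≠ w := by intro h; rw [h] at hu; omega
  obtain ⟨g', hg'def⟩ : ∃ g' : V → ℕ,
      g' = fun v => if v = u then r₂ else if v = w then r₁ else g v := ⟨_, rfl⟩
  have hg'u : g' u = r₂ := by simp [hg'def]
  have hg'w : g' w = r₁ := by simp [hg'def, if_neg (Ne.symm huw)]
  have hrest : ∀ v ∈ (univ.erase u).erase w, g' v = g v := by
    intro v hv
    simp only [Finset.mem_erase] at hv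
    simp only [hg'def, if_neg hv.2.1, if_neg hv.1]
  have hfun : g' = fun z => if z = u then g u - 1 else if z = w then g z + 1 else g z := by
    funext z
    simp only [hg'def]
    by_cases h1 : z = u
    · rw [if_pos h1, if_pos h1]; omega
    · rw [if_neg h1, if_neg h1]
      by_cases h2 : z = w
      · rw [if_pos h2, if_pos h2, h2]; omega
      · rw [if_neg h2, if_neg h2]
  have hrh : Graphical g' := by
    rw [hfun]; exact hg.robinHood (by omega)
  have hsplit : ∀ h : V → ℕ, ∑ v, h v = h u + (h w + ∑ v ∈ (univ.erase u).erase w, h v) := by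
    intro h
    rw [← Finset.add_sum_erase _ h (mem_univ u), ← Finset.add_sum_erase _ h
      (Finset.mem_erase.mpr ⟨Ne.symm huw, mem_univ w⟩)]
  have hsum' : ∑ v, g' v = ∑ v, g v := by
    rw [hsplit g', hsplit g, hg'u, hg'w, hu]
    have hre : ∑ v ∈ (univ.erase u).erase w, g' v = ∑ v ∈ (univ.erase u).erase w, g v :=
      Finset.sum_congr rfl hrest
    rw [hre]
    omega
  have hSSg' : ∀ r, SS g' r + (if r₁ ≤ r ∧ r ≤ r₂ then 1 else 0) = SS g r := by
    intro r
    unfold SS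
    have hs1 : ∑ v, (g' v - r) = (g' u - r) + ((g' w - r) +
        ∑ v ∈ (univ.erase u).erase w, (g' v - r)) := hsplit (fun v => g' v - r)
    have hs2 : ∑ v, (g v - r) = (g u - r) + ((g w - r) +
        ∑ v ∈ (univ.erase u).erase w, (g v - r)) := hsplit (fun v => g v - r)
    have hre : ∑ v ∈ (univ.erase u).erase w, (g' v - r) =
        ∑ v ∈ (univ.erase u).erase w, (g v - r) :=
      Finset.sum_congr rfl (fun v hv => by rw [hrest v hv])
    rw [hs1, hs2, hre, hg'u, hg'w, hu]
    by_cases hcase : r₁ ≤ r ∧ r ≤ r₂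
    · rw [if_pos hcase]
      obtain ⟨hc1, hc2⟩ := hcase
      omega
    · rw [if_neg hcase]
      have h' : r < r₁ ∨ r₂ < r := by
        rcases Nat.lt_or_ge r r₁ with h | h
        · exact Or.inl h
        · right; by_contra hh; exact hcase ⟨h, by omega⟩
      rcases h' with h' | h' <;> omega
  have hdom' : ∀ r, SS f r ≤ SS g' r := by
    intro r
    have h1 := hSSg' r
    by_cases hcase : r₁ ≤ r ∧ r ≤ r₂
    · have h2 := hQr r hcase.1 hcase.2
      rw [if_pos hcase] at h1; omega
    · have h2 := hdom r
      rw [if_neg hcase] at h1; omega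
  have hM' : (∑ r ∈ Finset.range (∑ v, g' v + 1), (SS g' r - SS f r)) < N := by
    rw [hsum', ← hM]
    apply Finset.sum_lt_sum
    · intro i _
      have h1 := hSSg' i
      have h2 := hdom' i
      by_cases hcase : r₁ ≤ i ∧ i ≤ r₂
      · rw [if_pos hcase] at h1; omega
      · rw [if_neg hcase] at h1; omega
    · refine ⟨r₁, ?_, ?_⟩
      · rw [Finset.mem_range]
        have hle : g u ≤ ∑ v, g v :=
          Finset.single_le_sum (fun _ _ => Nat.zero_le _) (mem_univ u)
        omega
      · have h1 := hSSg' r₁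
        have h2 := hdom' r₁
        have h3 := hQr r₁ (le_refl _) (by omega)
        rw [if_pos ⟨le_refl _, by omega⟩] at h1
        omega
  exact ih _ hM' f g' (by rw [hsum, ← hsum']) hdom' hrh rfl

lemma Graphical.of_dominated {f g : V → ℕ} (hsum : ∑ v, f v = ∑ v, g v)
    (hdom : ∀ r, SS f r ≤ SS g r) (hg : Graphical g) : Graphical f :=
  Graphical.of_dominated_aux _ f g hsum hdom hg rfl

end Descent2
section Majorant

lemma graphical_hub (m k : ℕ) (hm : 1 ≤ m) (hmk : 2 * k - 1 ≤ m) (hk : 1 ≤ k) :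
    Graphical (fun v : Option (ZMod m) => match v with
      | none => m
      | some _ => 2 * k - 1) := by
  haveI : NeZero m := ⟨by omega⟩
  classical
  set S : Finset (ZMod m) :=
    univ.filter (fun x => x ≠ 0 ∧ (x.val ≤ k - 1 ∨ m ≤ x.val + (k - 1))) with hSdef
  have hmemS : ∀ x : ZMod m, x ∈ S ↔ x ≠ 0 ∧ (x.val ≤ k - 1 ∨ m ≤ x.val + (k - 1)) := by
    intro x; simp [hSdef]
  have hSneg : ∀ x, x ∈ S → -x ∈ S := by
    intro x hx
    rw [hmemS] at hx ⊢
    obtain ⟨hx0, hxc⟩ := hx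
    have hv : x.val < m := ZMod.val_lt x
    have hv0 : x.val ≠ 0 := fun h => hx0 ((ZMod.val_eq_zero x).mp h)
    have hneg : (-x).val = m - x.val := by
      rw [ZMod.neg_val, if_neg hx0]
    refine ⟨fun h => hx0 (by simpa using congrArg Neg.neg h), ?_⟩
    rw [hneg]
    omega
  have hScard : S.card = 2 * k - 2 := by
    have hT : S.card = ((Finset.Ico 1 k) ∪ (Finset.Ico (m - (k - 1)) m)).card := by
      apply Finset.card_bij (fun x _ => x.val)
      · intro x hx
        rw [hmemS] at hx
        have hv : x.val < m := ZMod.val_lt x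
        have hv0 : x.val ≠ 0 := fun h => hx.1 ((ZMod.val_eq_zero x).mp h)
        simp only [Finset.mem_union, Finset.mem_Ico]
        rcases hx.2 with h | h
        · left; omega
        · right; omega
      · intro x _ y _ hxy
        exact ZMod.val_injective m hxy
      · intro j hj
        simp only [Finset.mem_union, Finset.mem_Ico] at hj
        have hjm : j < m := by rcases hj with h | h <;> omega
        have hj1 : 1 ≤ j := by rcases hj with h | h <;> omega
        refine ⟨(j : ZMod m), ?_, ZMod.val_natCast_of_lt hjm⟩
        rw [hmemS]
        have hval : ((j : ℕ) : ZMod m).val = j := ZMod.val_natCast_of_lt hjm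
        constructor
        · intro h
          rw [h] at hval
          simp [ZMod.val_zero] at hval
          omega
        · rw [hval]; rcases hj with h | h <;> omega
    rw [hT, Finset.card_union_of_disjoint, Nat.card_Ico, Nat.card_Ico]
    · omega
    · rw [Finset.disjoint_left]
      intro j hj hj'
      simp only [Finset.mem_Ico] at hj hj'
      omega
  have h0S : (0 : ZMod m) ∉ S := by rw [hmemS]; tauto
  set C : SimpleGraph (ZMod m) :=
    { Adj := fun a b => a - b ∈ S
      symm := by
        constructor
        intro a b h
        have : b - a = -(a - b) := by ring
        rw [this]
        exact hSneg _ h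
      loopless := by constructor; intro a h; rw [sub_self] at h; exact h0S h } with hCdef
  have hCadj : ∀ a b : ZMod m, C.Adj a b ↔ a - b ∈ S := fun a b => Iff.rfl
  have hCdeg : ∀ a, (C.neighborSet a).ncard = 2 * k - 2 := by
    intro a
    have hset : C.neighborSet a = (fun s => a - s) '' (S : Set (ZMod m)) := by
      ext b
      simp only [SimpleGraph.mem_neighborSet, hCadj, Set.mem_image, Finset.mem_coe]
      constructor
      · intro h; exact ⟨a - b, h, by ring⟩
      · rintro ⟨s, hs, rfl⟩
        simpa [sub_sub_cancel] using hs
    rw [hset, Set.ncard_image_of_injective _ sub_right_injective,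
      Set.ncard_coe_finset, hScard]
  -- the hub graph
  refine ⟨⟨fun a b => match a, b with
    | none, none => False
    | none, some _ => True
    | some _, none => True
    | some x, some y => C.Adj x y, ?_, ?_⟩, ?_⟩
  · constructor
    rintro (_ | x) (_ | y) h
    · exact h
    · trivial
    · trivial
    · exact C.adj_symm h
  · constructor
    rintro (_ | x) h
    · exact h
    · exact C.irrefl h
  · rintro (_ | x)
    · show Set.ncard {b : Option (ZMod m) | match (none : Option (ZMod m)), b with
        | none, none => False
        | none, some _ => True
        | some _, none => True
        | some x, some y => C.Adj x y} = m
      have hset : {b : Option (ZMod m) | match (none : Option (ZMod m)), b with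
        | none, none => False
        | none, some _ => True
        | some _, none => True
        | some x, some y => C.Adj x y} = Set.range some := by
        ext (_ | b) <;> simp
      rw [hset, ← Set.image_univ, Set.ncard_image_of_injective _ (Option.some_injective _),
        Set.ncard_univ, Nat.card_eq_fintype_card, ZMod.card]
    · show Set.ncard {b : Option (ZMod m) | match (some x : Option (ZMod m)), b with
        | none, none => False
        | none, some _ => True
        | some _, none => True
        | some x, some y => C.Adj x y} = 2 * k - 1
      have hset : {b : Option (ZMod m) | match (some x : Option (ZMod m)), b with
        | none, none => False
        | none, some _ => True
        | some _, none => True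
        | some x, some y => C.Adj x y} = insert none (some '' C.neighborSet x) := by
        ext (_ | b)
        · simp
        · simp only [Set.mem_setOf_eq, Set.mem_insert_iff, Set.mem_image,
            SimpleGraph.mem_neighborSet]
          constructor
          · intro h
            exact Or.inr ⟨b, h, rfl⟩
          · rintro (h | ⟨y, hy, hyb⟩)
            · exact absurd h (by simp)
            · cases Option.some_injective _ hyb
              exact hy
      rw [hset, Set.ncard_insert_of_notMem (by simp),
        Set.ncard_image_of_injective _ (Option.some_injective _), hCdeg]
      omega

lemma graphical_gstar (n k : ℕ) (hk : 1 ≤ k) (hn : 2 * k ≤ n) :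
    Graphical (fun v : Fin n => if v.val = 0 then n - 1 else 2 * k - 1) := by
  obtain ⟨m', rfl⟩ : ∃ m', n = m' + 1 + 1 := ⟨n - 2, by omega⟩
  have h := graphical_hub (m' + 1) k (by omega) (by omega) hk
  set e : Fin (m' + 1 + 1) ≃ Option (ZMod (m' + 1)) := finSuccEquiv (m' + 1) with hedef
  have h2 := h.comp_equiv e
  convert h2 using 1
  funext v
  simp only [Function.comp_apply]
  induction v using Fin.cases with
  | zero =>
    have he : e 0 = none := by rw [hedef]; exact finSuccEquiv_zero
    rw [he]
    simp
  | succ i =>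
    have he : e i.succ = some i := by rw [hedef]; exact finSuccEquiv_succ i
    rw [he]
    simp [Fin.val_succ]

end Majorant
section Main

theorem sum_of_tree_degree_sequences_graphical' {k n : ℕ} (D : Fin k → Fin n → ℕ)
    (hD : ∀ i, TreeDegSeq (D i)) (hleaves : NoCommonLeaves D) :
    ∃ G : SimpleGraph (Fin n), ∀ v, (G.neighborSet v).ncard = ∑ i, D i v := by
  classical
  rcases Nat.eq_zero_or_pos k with hk0 | hk
  · subst hk0
    refine ⟨⊥, fun v => ?_⟩
    have hbot : (⊥ : SimpleGraph (Fin n)).neighborSet v = ∅ := by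
      ext w; simp
    rw [hbot, Set.ncard_empty]
    simp
  set f : Fin n → ℕ := fun v => ∑ i, D i v with hfdef
  show Graphical f
  have hDsum : ∀ i, (∑ v, D i v) + 2 = 2 * n := fun i => (hD i).2
  have hDpos : ∀ i v, 1 ≤ D i v := fun i => (hD i).1
  -- each tree has at least two leaves
  have hL : ∀ i, 2 ≤ (univ.filter (fun v => D i v = 1)).card := by
    intro i
    have hsum := hDsum i
    have hpt : ∀ v, 2 ≤ D i v + (if D i v = 1 then 1 else 0) := by
      intro v; have := hDpos i v; by_cases h : D i v = 1 <;> simp [h] <;> omega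
    have hge : ∑ v : Fin n, 2 ≤ ∑ v, (D i v + if D i v = 1 then 1 else 0) :=
      Finset.sum_le_sum fun v _ => hpt v
    rw [Finset.sum_add_distrib, ← Finset.card_filter] at hge
    simp only [Finset.sum_const, Finset.card_univ, Fintype.card_fin, smul_eq_mul] at hge
    omega
  -- leaf sets are disjoint, hence 2k ≤ n
  have hdisj : ∀ i j : Fin k, i ≠ j → Disjoint (univ.filter (fun v => D i v = 1))
      (univ.filter (fun v => D j v = 1)) := by
    intro i j hij
    rw [Finset.disjoint_left]
    intro v hv hv'
    simp only [mem_filter] at hv hv'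
    have := hleaves v i j hij hv.2
    omega
  have hn2k : 2 * k ≤ n := by
    have hcard : ((univ : Finset (Fin k)).biUnion
        (fun i => univ.filter (fun v => D i v = 1))).card =
        ∑ i, (univ.filter (fun v => D i v = 1)).card :=
      Finset.card_biUnion (fun i _ j _ hij => hdisj i j hij)
    have h1 : (univ : Finset (Fin k)).card • 2 ≤
        ∑ i, (univ.filter (fun v => D i v = 1)).card :=
      Finset.card_nsmul_le_sum _ _ _ (fun i _ => hL i)
    have h2 : ((univ : Finset (Fin k)).biUnion
        (fun i => univ.filter (fun v => D i v = 1))).card ≤ (univ : Finset (Fin n)).card :=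
      Finset.card_le_card (subset_univ _)
    simp only [Finset.card_univ, Fintype.card_fin, smul_eq_mul] at h1 h2
    omega
  have hn2 : 2 ≤ n := by omega
  -- lower bound on f
  have hlb : ∀ v, 2 * k - 1 ≤ f v := by
    intro v
    simp only [hfdef]
    by_cases hex : ∃ i₀, D i₀ v = 1
    · obtain ⟨i₀, hi₀⟩ := hex
      have hpt : ∀ i, (if i = i₀ then 1 else 2) ≤ D i v := by
        intro i
        by_cases h : i = i₀
        · subst h; simp [hi₀]
        · simp only [if_neg h]
          exact hleaves v i₀ i (fun hh => h hh.symm) hi₀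
      have hsum2 : ∑ i, (if i = i₀ then 1 else 2) ≤ ∑ i, D i v :=
        Finset.sum_le_sum fun i _ => hpt i
      have hval : ∑ i : Fin k, (if i = i₀ then 1 else 2) = 2 * k - 1 := by
        rw [← Finset.add_sum_erase _ _ (mem_univ i₀), if_pos rfl]
        have : ∀ i ∈ univ.erase i₀, (if i = i₀ then 1 else 2) = 2 := by
          intro i hi
          simp only [mem_erase] at hi
          rw [if_neg hi.1]
        rw [Finset.sum_congr rfl this, Finset.sum_const,
          Finset.card_erase_of_mem (mem_univ i₀), Finset.card_univ, Fintype.card_fin,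
          smul_eq_mul]
        omega
      omega
    · push_neg at hex
      have hpt : ∀ i, 2 ≤ D i v := fun i => by
        have h1 := hDpos i v; have h2 := hex i; omega
      have h3 : (univ : Finset (Fin k)).card • 2 ≤ ∑ i, D i v :=
        Finset.card_nsmul_le_sum _ _ _ (fun i _ => hpt i)
      simp only [Finset.card_univ, Fintype.card_fin, smul_eq_mul] at h3
      omega
  -- total sum of f
  have hsumf : (∑ v, f v) + 2 * k = 2 * k * n := by
    have hcomm : ∑ v, f v = ∑ i, ∑ v, D i v := by
      simp only [hfdef]; rw [Finset.sum_comm]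
    rw [hcomm]
    have h2 : ∑ i : Fin k, ((∑ v, D i v) + 2) = ∑ i : Fin k, 2 * n :=
      Finset.sum_congr rfl (fun i _ => hDsum i)
    rw [Finset.sum_add_distrib] at h2
    simp only [Finset.sum_const, Finset.card_univ, Fintype.card_fin, smul_eq_mul] at h2
    have hr : k * (2 * n) = 2 * k * n := by ring
    have hr2 : k * 2 = 2 * k := by ring
    linarith
  -- upper bound on f
  have hub : ∀ v, f v ≤ n - 1 := by
    intro v
    have hrest : (n - 1) * (2 * k - 1) ≤ ∑ u ∈ univ.erase v, f u := by
      have h := Finset.card_nsmul_le_sum (univ.erase v) f (2 * k - 1) (fun u _ => hlb u)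
      rwa [Finset.card_erase_of_mem (mem_univ v), Finset.card_univ, Fintype.card_fin,
        smul_eq_mul] at h
    have hsplitv : f v + ∑ u ∈ univ.erase v, f u = ∑ u, f u :=
      Finset.add_sum_erase _ _ (mem_univ v)
    have h1 : 1 ≤ n := by omega
    have h2 : 1 ≤ 2 * k := by omega
    zify [h1, h2] at hrest hsumf hsplitv ⊢
    have hexp : ((n : ℤ) - 1) * (2 * k - 1) = 2 * k * n - n - 2 * k + 1 := by ring
    linarith
  -- the majorant
  set v₀ : Fin n := ⟨0, by omega⟩ with hv₀def
  set gs : Fin n → ℕ := fun v => if v.val = 0 then n - 1 else 2 * k - 1 with hgsdef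
  have hgs : Graphical gs := graphical_gstar n k hk hn2k
  have hgsv₀ : gs v₀ = n - 1 := by simp [hgsdef, hv₀def]
  have hgsrest : ∀ v ∈ univ.erase v₀, gs v = 2 * k - 1 := by
    intro v hv
    simp only [mem_erase] at hv
    have hvne : v.val ≠ 0 := fun h => hv.1 (Fin.ext (by simp [hv₀def, h]))
    simp [hgsdef, hvne]
  have hgssum : ∑ v, gs v = ∑ v, f v := by
    have hsplit : gs v₀ + ∑ v ∈ univ.erase v₀, gs v = ∑ v, gs v :=
      Finset.add_sum_erase _ _ (mem_univ v₀)
    rw [← hsplit, Finset.sum_congr rfl hgsrest, Finset.sum_const,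
      Finset.card_erase_of_mem (mem_univ v₀), Finset.card_univ, Fintype.card_fin,
      smul_eq_mul, hgsv₀]
    have h1 : 1 ≤ n := by omega
    have h2 : 1 ≤ 2 * k := by omega
    zify [h1, h2] at hsumf ⊢
    have hexp : ((n : ℤ) - 1) * (2 * k - 1) = 2 * k * n - n - 2 * k + 1 := by ring
    linarith
  -- dominance
  have hdom : ∀ r, SS f r ≤ SS gs r := by
    intro r
    rcases Nat.lt_or_ge r (2 * k) with hr | hr
    · -- below the waterline everything is exact
      have hf : SS f r + n * r = ∑ v, f v := by
        unfold SS
        have h1 : ∑ v : Fin n, ((f v - r) + r) = ∑ v, f v :=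
          Finset.sum_congr rfl fun v _ => by have := hlb v; omega
        rw [Finset.sum_add_distrib, Finset.sum_const, Finset.card_univ, Fintype.card_fin,
          smul_eq_mul] at h1
        omega
      have hg : SS gs r + n * r = ∑ v, gs v := by
        unfold SS
        have h1 : ∑ v : Fin n, ((gs v - r) + r) = ∑ v, gs v := by
          refine Finset.sum_congr rfl fun v _ => ?_
          by_cases h : v.val = 0
          · have : gs v = n - 1 := by simp [hgsdef, h]
            omega
          · have : gs v = 2 * k - 1 := by simp [hgsdef, h]
            omega
        rw [Finset.sum_add_distrib, Finset.sum_const, Finset.card_univ, Fintype.card_fin,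
          smul_eq_mul] at h1
        omega
      omega
    · -- above 2k - 1
      set F := univ.filter (fun v => r < f v) with hFdef
      have hgsr : (n - 1) - r ≤ SS gs r := by
        unfold SS
        have hle : gs v₀ - r ≤ ∑ v, (gs v - r) :=
          Finset.single_le_sum (f := fun v => gs v - r)
            (fun v _ => Nat.zero_le _) (mem_univ v₀)
        rw [hgsv₀] at hle
        omega
      rcases Nat.eq_zero_or_pos F.card with hN | hN
      · have hzero : SS f r = 0 := by
          unfold SS
          apply Finset.sum_eq_zero
          intro v _
          have hnin : v ∉ F := by
            rw [Finset.card_eq_zero] at hN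
            simp [hN]
          rw [hFdef] at hnin
          simp only [mem_filter, mem_univ, true_and, not_lt] at hnin
          omega
        omega
      · obtain ⟨v₁, hv₁⟩ : F.Nonempty := Finset.card_pos.mp hN
        have hrn : r + 1 ≤ n - 1 := by
          have h1 : r < f v₁ := by
            rw [hFdef] at hv₁
            exact (mem_filter.mp hv₁).2
          have h2 := hub v₁
          omega
        have hSf : SS f r = ∑ v ∈ F, (f v - r) := by
          unfold SS
          refine (Finset.sum_subset (subset_univ F) (fun v _ hvF => ?_)).symm
          rw [hFdef] at hvF
          simp only [mem_filter, mem_univ, true_and, not_lt] at hvF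
          omega
        have htsub : ∑ v ∈ F, (f v - r) + F.card * r = ∑ v ∈ F, f v := by
          have hc : ∑ v ∈ F, ((f v - r) + r) = ∑ v ∈ F, f v := by
            refine Finset.sum_congr rfl fun v hv => ?_
            rw [hFdef] at hv
            have := (mem_filter.mp hv).2
            omega
          rw [← hc, Finset.sum_add_distrib, Finset.sum_const, smul_eq_mul]
        have hcomp : ∑ v ∈ F, f v + (n - F.card) * (2 * k - 1) ≤ ∑ v, f v := by
          have hsplit : ∑ v ∈ F, f v + ∑ v ∈ Fᶜ, f v = ∑ v, f v :=
            Finset.sum_add_sum_compl F f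
          have hlow : Fᶜ.card • (2 * k - 1) ≤ ∑ v ∈ Fᶜ, f v :=
            Finset.card_nsmul_le_sum _ _ _ (fun v _ => hlb v)
          have hccard : Fᶜ.card = n - F.card := by
            rw [Finset.card_compl, Fintype.card_fin]
          rw [hccard, smul_eq_mul] at hlow
          omega
        have hNn : F.card ≤ n := by
          calc F.card ≤ (univ : Finset (Fin n)).card := Finset.card_le_card (subset_univ _)
            _ = n := by rw [Finset.card_univ, Fintype.card_fin]
        have hfinal : SS f r ≤ (n - 1) - r := by
          rw [hSf]
          have h1 : 1 ≤ n := by omega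
          have h2 : 1 ≤ 2 * k := by omega
          have h3 : r ≤ n - 1 := by omega
          zify [h1, h2, h3, hNn] at htsub hcomp hsumf ⊢
          have hexp : ((n : ℤ) - F.card) * (2 * k - 1) =
              2 * k * n - n - 2 * k * F.card + F.card := by ring
          have hexp2 : ((F.card : ℤ) - 1) * (r - (2 * k - 1)) =
              F.card * r - r - 2 * k * F.card + F.card + 2 * k - 1 := by ring
          have haux : (0 : ℤ) ≤ ((F.card : ℤ) - 1) * (r - (2 * k - 1)) := by
            apply mul_nonneg
            · have : (1 : ℤ) ≤ (F.card : ℤ) := by exact_mod_cast hN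
              linarith
            · have : (2 * k : ℤ) ≤ (r : ℤ) := by exact_mod_cast hr
              linarith
          linarith
        omega
  exact Graphical.of_dominated hgssum.symm hdom hgs

end Main

/-- The coordinatewise sum of tree degree sequences without common leaves is graphical:
there is a simple graph whose degree at each vertex `v` is `∑ i, D i v`. -/
theorem sum_of_tree_degree_sequences_graphical {k n : ℕ} (D : Fin k → Fin n → ℕ)
    (hD : ∀ i, TreeDegSeq (D i)) (hleaves : NoCommonLeaves D) :
    ∃ G : SimpleGraph (Fin n), ∀ v, (G.neighborSet v).ncard = ∑ i, D i v := by
  exact sum_of_tree_degree_sequences_graphical' D hD hleaves
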